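/- arXiv:1411.7356 — 3 statements merged into one kernel-verified Lean document; each statement's English description precedes it below -/
import Mathlib

section
/- Let 1 ≤ k < d, α ∈ (0,1), s ∈ (0,1] and V ∈ G(d,k). Then there exist a constant b ≥ 1 depending only on d, a natural number m ≤ K(αs)^{1−d} with K depending only on d, and unit vectors w₁, …, w_m ∈ S^{d−1} such that X(0,V,α) ⊆ ⋃_{j=1}^m X⁺(0,w_j,αs) ⊆ ⋃_{j=1}^m X⁺(0,w_j,α) ⊆ X(0,V,bα). -/
open MeasureTheory Metric Module Set
open scoped ENNReal NNReal RealInnerProductSpace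

noncomputable section

/-- Euclidean space `ℝ^d`. -/
abbrev Euc (d : ℕ) : Type := EuclideanSpace ℝ (Fin d)

/-- Orthogonal projection onto a subspace, as a map `ℝ^d → ℝ^d`. -/
noncomputable def projCLM {d : ℕ} (V : Submodule ℝ (Euc d)) : Euc d →L[ℝ] Euc d :=
  V.subtypeL.comp (V.orthogonalProjectionOnto)

/-- `E` is `n`-Ahlfors–David regular with constants `C₁ ≤ C₂`. -/
def IsADR {d : ℕ} (n : ℕ) (C₁ C₂ : ℝ) (E : Set (Euc d)) : Prop :=
  0 < C₁ ∧ C₁ ≤ C₂ ∧ ∀ x ∈ E, ∀ r : ℝ, 0 < r → ENNReal.ofReal r ≤ EMetric.diam E →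
    ENNReal.ofReal (C₁ * r ^ n) ≤ μH[n] (E ∩ closedBall x r) ∧
      μH[n] (E ∩ closedBall x r) ≤ ENNReal.ofReal (C₂ * r ^ n)

/-- `Γ` is an `n`-dimensional Lipschitz graph with Lipschitz constant at most `M`:
`Γ = {p + A p : p ∈ P}` for an `n`-dimensional subspace `P` and `M`-Lipschitz `A : P → P^⊥`. -/
def IsLipGraph {d : ℕ} (n : ℕ) (M : ℝ≥0) (Γ : Set (Euc d)) : Prop :=
  ∃ (P : Submodule ℝ (Euc d)) (A : P → Pᗮ), finrank ℝ P = n ∧ LipschitzWith M A ∧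
    Γ = {x | ∃ p : P, x = (p : Euc d) + (A p : Euc d)}

/-- `E` has big pieces of Lipschitz graphs with constants `M` and `δ`. -/
def HasBPLG {d : ℕ} (n : ℕ) (M : ℝ≥0) (δ : ℝ) (E : Set (Euc d)) : Prop :=
  0 < δ ∧ ∀ x ∈ E, ∀ r : ℝ, 0 < r → ENNReal.ofReal r ≤ EMetric.diam E →
    ∃ Γ : Set (Euc d), IsLipGraph n M Γ ∧
      ENNReal.ofReal (δ * r ^ n) ≤ μH[n] (E ∩ Γ ∩ closedBall x r)

/-- The coordinate subspace `ℝⁿ × {0} ⊆ ℝ^d`. -/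
def coordSubspace (d n : ℕ) : Submodule ℝ (Euc d) where
  carrier := {x | ∀ i : Fin d, n ≤ (i : ℕ) → x i = 0}
  add_mem' := by
    intro a b ha hb i hi
    simp [PiLp.add_apply, ha i hi, hb i hi]
  zero_mem' := by intro i hi; rfl
  smul_mem' := by
    intro c a ha i hi
    simp [PiLp.smul_apply, ha i hi]

/-- The closed ball of radius `ρ` around `W` in the Grassmannian `G(d,n)`, realised as a set
of subspaces of `ℝ^d`, with the metric `‖V - W‖ = ‖π_V - π_W‖` (operator norm). -/
def grBall {d : ℕ} (n : ℕ) (W : Submodule ℝ (Euc d)) (ρ : ℝ) : Set (Submodule ℝ (Euc d)) :=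
  {V | finrank ℝ V = n ∧ ‖projCLM V - projCLM W‖ ≤ ρ}

/-- The Borel σ-algebra on subspaces of `ℝ^d`, induced by `V ↦ π_V`. -/
instance grassMeasurableSpace (d : ℕ) : MeasurableSpace (Submodule ℝ (Euc d)) :=
  MeasurableSpace.comap (fun V => projCLM V) (borel (Euc d →L[ℝ] Euc d))

/-- The orthogonal group `O(d)`. -/
abbrev OG (d : ℕ) := Matrix.orthogonalGroup (Fin d) ℝ

instance (d : ℕ) : MeasurableSpace (OG d) := borel _

/-- `μ` is the Haar probability measure on the orthogonal group `O(d)`: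
a left-invariant Borel probability measure. -/
def IsHaarProb {d : ℕ} (μ : Measure (OG d)) : Prop :=
  IsProbabilityMeasure μ ∧ ∀ g : OG d, Measure.map (fun h => g * h) μ = μ

/-- The measure `γ_{d,n}` on the Grassmannian: the pushforward of the Haar probability
measure `μ` on `O(d)` under the map `g ↦ g(ℝⁿ × {0})`. -/
def grassmannOf {d : ℕ} (n : ℕ) (μ : Measure (OG d)) : Measure (Submodule ℝ (Euc d)) :=
  Measure.map
    (fun g : OG d => (coordSubspace d n).map
      (Matrix.toEuclideanLin (g : Matrix (Fin d) (Fin d) ℝ))) μ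

/-- The pushforward `π_{V♯}(Hⁿ|_E)` of `Hⁿ` restricted to `E` under the orthogonal
projection onto `V`. -/
def projPush {d : ℕ} (n : ℕ) (E : Set (Euc d)) (V : Submodule ℝ (Euc d)) : Measure (Euc d) :=
  Measure.map (projCLM V) (μH[n].restrict E)

/-- `Hⁿ` on the subspace `V`. -/
def hausdorffOn {d : ℕ} (n : ℕ) (V : Submodule ℝ (Euc d)) : Measure (Euc d) :=
  μH[n].restrict (V : Set (Euc d))

/-- The squared `L²(V)`-norm of the Radon–Nikodym derivative of `π_{V♯}(Hⁿ|_E)` with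
respect to `Hⁿ` on `V`. -/
def pushL2sq {d : ℕ} (n : ℕ) (E : Set (Euc d)) (V : Submodule ℝ (Euc d)) : ℝ≥0∞ :=
  ∫⁻ z, ((projPush n E V).rnDeriv (hausdorffOn n V) z) ^ 2 ∂(hausdorffOn n V)

/-- `π_{V♯}(Hⁿ|_E) ∈ L²(V)`: the pushforward is absolutely continuous with respect to `Hⁿ`
on `V`, with square-integrable density. -/
def MemL2 {d : ℕ} (n : ℕ) (E : Set (Euc d)) (V : Submodule ℝ (Euc d)) : Prop :=
  projPush n E V ≪ hausdorffOn n V ∧ pushL2sq n E V < ∞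

/-- The (two-sided) cone `X(x, V, α) = {y : |π_{V^⊥}(x - y)| ≤ α |x - y|}`. -/
def cone {d : ℕ} (V : Submodule ℝ (Euc d)) (x : Euc d) (α : ℝ) : Set (Euc d) :=
  {y | ‖projCLM Vᗮ (x - y)‖ ≤ α * ‖x - y‖}

/-- The truncated cone `X(x, V, α, R, r)`. -/
def coneAnn {d : ℕ} (V : Submodule ℝ (Euc d)) (x : Euc d) (α R r : ℝ) : Set (Euc d) :=
  cone V x α ∩ (closedBall x R \ ball x r)

/-- The vertical cone `X(x, α) := X(x, {0} × ℝ^{d-n}, α) = {y : |π_{ℝⁿ×{0}}(x-y)| ≤ α|x-y|}`. -/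
def vertCone {d : ℕ} (n : ℕ) (x : Euc d) (α : ℝ) : Set (Euc d) :=
  {y | ‖projCLM (coordSubspace d n) (x - y)‖ ≤ α * ‖x - y‖}

/-- The truncated vertical cone `X(x, α, R, r)`. -/
def vertConeAnn {d : ℕ} (n : ℕ) (x : Euc d) (α R r : ℝ) : Set (Euc d) :=
  vertCone n x α ∩ (closedBall x R \ ball x r)

/-- `E` satisfies the `n`-dimensional `(θ, M)`-property: for every `x ∈ E` at most `M`
dyadic scales `j` have `X(x, θ, 2^{-j}, 2^{-j-1}) ∩ E ≠ ∅`. -/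
def ThetaMProp {d : ℕ} (n : ℕ) (θ : ℝ) (M : ℕ) (E : Set (Euc d)) : Prop :=
  ∀ x ∈ E,
    {j : ℤ | (vertConeAnn n x θ (2 ^ (-j)) (2 ^ (-j - 1)) ∩ E).Nonempty}.Finite ∧
    {j : ℤ | (vertConeAnn n x θ (2 ^ (-j)) (2 ^ (-j - 1)) ∩ E).Nonempty}.ncard ≤ M

/-- The one-sided cone `X⁺(x, w, α)` in direction `w`. -/
def oneSidedCone {d : ℕ} (w : Euc d) (x : Euc d) (α : ℝ) : Set (Euc d) :=
  {y | ‖projCLM (Submodule.span ℝ {w})ᗮ (x - y)‖ ≤ α * ‖x - y‖ ∧ 0 ≤ ⟪y - x, w⟫}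

/-- The truncated one-sided cone `X⁺(x, w, α, R, r)`. -/
def oneSidedConeAnn {d : ℕ} (w : Euc d) (x : Euc d) (α R r : ℝ) : Set (Euc d) :=
  oneSidedCone w x α ∩ (closedBall x R \ ball x r)

/-- Combining `x ∈ ℝⁿ` and `y ∈ ℝ^{d-n}` into a point of `ℝ^d = ℝⁿ × ℝ^{d-n}`. -/
def pairFun {d n : ℕ} (x : Euc n) (y : Euc (d - n)) : Euc d :=
  WithLp.toLp 2 fun (i : Fin d) => if h' : (i : ℕ) < n then x ⟨i, h'⟩ else y ⟨(i : ℕ) - n, by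
    have := i.isLt; omega⟩

lemma euc_coord_le_norm {d : ℕ} (x : Euc d) (i : Fin d) : |x i| ≤ ‖x‖ := by
  rw [EuclideanSpace.norm_eq, ← Real.sqrt_sq (abs_nonneg (x i))]
  apply Real.sqrt_le_sqrt
  have h := Finset.single_le_sum (f := fun j => ‖x j‖ ^ 2)
    (fun j _ => by positivity) (Finset.mem_univ i)
  simpa [Real.norm_eq_abs, sq_abs] using h

lemma euc_norm_le {d : ℕ} (x : Euc d) (a : ℝ) (ha : 0 ≤ a)
    (h : ∀ i, |x i| ≤ a) : ‖x‖ ≤ d * a := by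
  rw [EuclideanSpace.norm_eq, ← Real.sqrt_sq (by positivity : (0:ℝ) ≤ (d:ℝ) * a)]
  apply Real.sqrt_le_sqrt
  calc ∑ i, ‖x i‖ ^ 2 ≤ ∑ _i : Fin d, a ^ 2 := by
        apply Finset.sum_le_sum
        intro i _
        have := h i
        rw [Real.norm_eq_abs]
        nlinarith [abs_nonneg (x i)]
    _ = d * a ^ 2 := by simp [mul_comm]
    _ ≤ ((d:ℝ) * a) ^ 2 := by
        rcases Nat.eq_zero_or_pos d with h0 | h0
        · simp [h0]
        · have : (1:ℝ) ≤ d := by exact_mod_cast h0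
          nlinarith

lemma norm_projCLM_le {d : ℕ} (U : Submodule ℝ (Euc d)) (x : Euc d) :
    ‖projCLM U x‖ ≤ ‖x‖ := by
  have h1 : ‖projCLM U x‖ = ‖U.orthogonalProjectionOnto x‖ := rfl
  rw [h1]
  calc ‖U.orthogonalProjectionOnto x‖ ≤ ‖U.orthogonalProjectionOnto‖ * ‖x‖ :=
        (U.orthogonalProjectionOnto).le_opNorm x
    _ ≤ 1 * ‖x‖ := by
        apply mul_le_mul_of_nonneg_right (Submodule.orthogonalProjectionOnto_norm_le (K := U)) (norm_nonneg x)
    _ = ‖x‖ := one_mul _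

lemma projCLM_span_orthogonal {d : ℕ} {w : Euc d} (hw : ‖w‖ = 1) (v : Euc d) :
    projCLM (Submodule.span ℝ {w})ᗮ v = v - ⟪w, v⟫ • w := by
  have h1 : ((Submodule.span ℝ {w})ᗮ.orthogonalProjectionOnto v : Euc d)
      = v - ((Submodule.span ℝ {w}).orthogonalProjectionOnto v : Euc d) :=
    Submodule.starProjection_orthogonal_val v
  have h2 : ((Submodule.span ℝ {w}).orthogonalProjectionOnto v : Euc d) = ⟪w, v⟫ • w :=
    Submodule.starProjection_unit_singleton ℝ hw v
  show ((Submodule.span ℝ {w})ᗮ.orthogonalProjectionOnto v : Euc d) = v - ⟪w, v⟫ • w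
  rw [h1, h2]

lemma grid_exists (N : ℕ) (hN : 0 < N) (z : ℝ) (hz : |z| ≤ 1) :
    ∃ t : Fin N, |(-1 + (2*(t:ℝ)+1)/N) - z| ≤ 1/N := by
  have hNR : (0:ℝ) < N := by exact_mod_cast hN
  set W : ℝ := (z+1)*N/2 with hW
  have hW0 : 0 ≤ W := by
    have : -1 ≤ z := (abs_le.mp hz).1
    have : 0 ≤ z + 1 := by linarith
    positivity
  have hWN : W ≤ N := by
    have : z ≤ 1 := (abs_le.mp hz).2
    rw [hW]
    rw [div_le_iff₀ (by norm_num : (0:ℝ) < 2)]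
    nlinarith
  have key : ∃ t : Fin N, |2*(t:ℝ)+1 - 2*W| ≤ 1 := by
    by_cases hc : ⌊W⌋₊ ≤ N - 1
    · refine ⟨⟨⌊W⌋₊, by omega⟩, ?_⟩
      have h1 : (⌊W⌋₊ : ℝ) ≤ W := Nat.floor_le hW0
      have h2 : W < ⌊W⌋₊ + 1 := Nat.lt_floor_add_one W
      rw [abs_le]
      constructor <;> simp only [] <;> push_cast <;> nlinarith
    · refine ⟨⟨N - 1, by omega⟩, ?_⟩
      have hNW : (N:ℝ) ≤ W := by
        have : N ≤ ⌊W⌋₊ := by omega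
        calc (N:ℝ) ≤ (⌊W⌋₊:ℝ) := by exact_mod_cast this
          _ ≤ W := Nat.floor_le hW0
      have hWeq : W = N := le_antisymm hWN hNW
      have : ((⟨N-1, by omega⟩ : Fin N) : ℝ) = (N:ℝ) - 1 := by
        simp only [Fin.val_mk]
        have : (1:ℕ) ≤ N := hN
        push_cast [Nat.cast_sub this]
        ring
      rw [this, hWeq]
      rw [abs_le]; constructor <;> nlinarith
  obtain ⟨t, ht⟩ := key
  refine ⟨t, ?_⟩
  have heq : (-1 + (2*(t:ℝ)+1)/N) - z = (2*(t:ℝ)+1 - 2*W)/N := by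
    field_simp [hW]
    ring
  rw [heq, abs_div, abs_of_pos hNR]
  exact div_le_div_of_nonneg_right ht hNR.le
  
lemma normalize_sub_le {E : Type*} [NormedAddCommGroup E] [NormedSpace ℝ E] {x g : E}
    (hx : 1 ≤ ‖x‖) (hg : 1 ≤ ‖g‖) :
    ‖‖g‖⁻¹ • g - ‖x‖⁻¹ • x‖ ≤ 2 * ‖g - x‖ := by
  have hx0 : ‖x‖ ≠ 0 := by linarith
  have hg0 : ‖g‖ ≠ 0 := by linarith
  have hdecomp : ‖g‖⁻¹ • g - ‖x‖⁻¹ • x = ‖g‖⁻¹ • (g - x) + (‖g‖⁻¹ - ‖x‖⁻¹) • x := by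
    rw [smul_sub, sub_smul]
    abel
  rw [hdecomp]
  have h1 : ‖‖g‖⁻¹ • (g - x)‖ ≤ ‖g - x‖ := by
    rw [norm_smul, Real.norm_eq_abs, abs_of_pos (by positivity)]
    have : ‖g‖⁻¹ ≤ 1 := by
      rw [inv_le_one_iff₀]; right; exact hg
    nlinarith [norm_nonneg (g - x)]
  have h2 : ‖(‖g‖⁻¹ - ‖x‖⁻¹) • x‖ ≤ ‖g - x‖ := by
    rw [norm_smul, Real.norm_eq_abs]
    have heq : ‖g‖⁻¹ - ‖x‖⁻¹ = (‖x‖ - ‖g‖) / (‖g‖ * ‖x‖) := by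
      field_simp
    rw [heq, abs_div, abs_of_pos (by positivity : (0:ℝ) < ‖g‖ * ‖x‖)]
    have h3 : |‖x‖ - ‖g‖| ≤ ‖g - x‖ := by
      rw [abs_sub_comm]
      exact abs_norm_sub_norm_le g x
    calc |‖x‖ - ‖g‖| / (‖g‖ * ‖x‖) * ‖x‖ = |‖x‖ - ‖g‖| / ‖g‖ := by
          field_simp
      _ ≤ ‖g - x‖ / 1 := by
          apply div_le_div₀ (norm_nonneg _) h3 one_pos hg
      _ = ‖g - x‖ := div_one _
  calc ‖‖g‖⁻¹ • (g - x) + (‖g‖⁻¹ - ‖x‖⁻¹) • x‖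
      ≤ ‖‖g‖⁻¹ • (g - x)‖ + ‖(‖g‖⁻¹ - ‖x‖⁻¹) • x‖ := norm_add_le _ _
    _ ≤ 2 * ‖g - x‖ := by linarith

lemma sphere_net (d : ℕ) (hd : 1 ≤ d) (e : ℝ) (he : 0 < e) (he1 : e ≤ 1) :
    ∃ (m : ℕ) (p : Fin m → Euc d), 0 < m ∧ (m : ℝ) * e ^ (d - 1) ≤ (8*d)^d ∧
      (∀ j, ‖p j‖ = 1) ∧ ∀ u : Euc d, ‖u‖ = 1 → ∃ j, ‖p j - u‖ ≤ e := by
  classical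
  have hdR : (1:ℝ) ≤ d := by exact_mod_cast hd
  set N : ℕ := ⌈(2*d)/e⌉₊ with hNdef
  have hNpos : 0 < N := Nat.ceil_pos.mpr (by positivity)
  have hNR : (0:ℝ) < N := by exact_mod_cast hNpos
  have hNge : (2*d)/e ≤ N := Nat.le_ceil _
  have hNle : (N:ℝ) ≤ 4*d/e := by
    have h1 : (N:ℝ) < (2*d)/e + 1 := Nat.ceil_lt_add_one (by positivity)
    have h2 : (1:ℝ) ≤ 2*d/e := by
      rw [le_div_iff₀ he]; nlinarith
    have h3 : (2*d)/e + 1 ≤ 4*d/e := by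
      have : 4*(d:ℝ)/e = 2*d/e + 2*d/e := by ring
      linarith
    linarith
  set I := Σ _i : Fin d, Bool × ({j : Fin d // j ≠ _i} → Fin N) with hI
  -- grid values
  set vv : Fin N → ℝ := fun t => -1 + (2*(t:ℝ)+1)/N with hvv
  -- the corner points
  set g : I → Euc d := fun ι =>
    (WithLp.toLp 2 (fun j => if h : j = ι.1 then (if ι.2.1 then (1:ℝ) else -1) else vv (ι.2.2 ⟨j, h⟩)) :
      EuclideanSpace ℝ (Fin d)) with hg
  have hgcoord1 : ∀ ι : I, |g ι ι.1| = 1 := by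
    intro ι
    simp only [hg, PiLp.toLp_apply, dif_pos]
    cases ι.2.1 <;> norm_num
  have hg1 : ∀ ι : I, 1 ≤ ‖g ι‖ := fun ι => (hgcoord1 ι) ▸ euc_coord_le_norm (g ι) ι.1
  set m := Fintype.card I with hm
  have hmval : m = d * (2 * N ^ (d-1)) := by
    simp [hm, hI, Fintype.card_sigma, Fintype.card_fun, Fintype.card_subtype_compl, mul_comm]
  set p : Fin m → Euc d := fun jj =>
    ‖g ((Fintype.equivFin I).symm jj)‖⁻¹ • g ((Fintype.equivFin I).symm jj) with hp
  have hgne : ∀ ι : I, ‖g ι‖ ≠ 0 := fun ι => by have := hg1 ι; linarith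
  refine ⟨m, p, ?_, ?_, ?_, ?_⟩
  · rw [hmval]; positivity
  · -- counting
    rw [hmval]
    have hNe : (N:ℝ) * e ≤ 4*d := by
      calc (N:ℝ)*e ≤ (4*d/e)*e := mul_le_mul_of_nonneg_right hNle he.le
        _ = 4*d := by field_simp
    have hme : (↑(d * (2 * N ^ (d-1))) : ℝ) * e^(d-1) = 2*d * ((N:ℝ)*e)^(d-1) := by
      push_cast
      rw [mul_pow]
      ring
    rw [hme]
    have h4 : ((N:ℝ)*e)^(d-1) ≤ (4*d)^(d-1) :=
      pow_le_pow_left₀ (by positivity) hNe _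
    have h5 : ((4:ℝ)*d)^(d-1) ≤ (8*d)^(d-1) :=
      pow_le_pow_left₀ (by positivity) (by linarith) _
    have h6 : ((8:ℝ)*d)^d = (8*d)^(d-1) * (8*d) := by
      rw [← pow_succ]
      congr 1
      omega
    rw [h6]
    have h7 : (0:ℝ) ≤ ((N:ℝ)*e)^(d-1) := by positivity
    nlinarith [pow_nonneg (by positivity : (0:ℝ) ≤ 8*d) (d-1)]
  · intro j
    rw [hp]
    simp only []
    rw [norm_smul, Real.norm_eq_abs, abs_of_nonneg (by positivity), inv_mul_cancel₀ (hgne _)]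
  · -- covering
    intro u hu
    obtain ⟨i, -, hi⟩ := Finset.exists_max_image (Finset.univ : Finset (Fin d)) (fun j => |u j|)
      ⟨⟨0, hd⟩, Finset.mem_univ _⟩
    have hc : u i ≠ 0 := by
      intro h0
      have : ‖u‖ ≤ (d:ℝ) * 0 := euc_norm_le u 0 le_rfl (fun j => by
        have := hi j (Finset.mem_univ j); rw [h0] at this; simpa using this)
      rw [hu] at this; simp at this; linarith
    have hcabs : 0 < |u i| := abs_pos.mpr hc
    have hcle : |u i| ≤ 1 := hu ▸ euc_coord_le_norm u i
    set x : Euc d := |u i|⁻¹ • u with hx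
    have hxcoord : ∀ j, x j = |u i|⁻¹ * u j := fun j => rfl
    have hxabs : ∀ j, |x j| ≤ 1 := by
      intro j
      rw [hxcoord, abs_mul, abs_inv, abs_abs]
      rw [inv_mul_le_one₀ hcabs] -- maybe wrong name
      · exact hi j (Finset.mem_univ j)
    have hxnorm : ‖x‖ = |u i|⁻¹ := by
      rw [hx, norm_smul, Real.norm_eq_abs, abs_inv, abs_abs, hu, mul_one]
    have hx1 : 1 ≤ ‖x‖ := by rw [hxnorm]; exact one_le_inv_iff₀.mpr ⟨hcabs, hcle⟩ -- name?
    set b : Bool := decide (0 < u i) with hb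
    have hxi : x i = if b then (1:ℝ) else -1 := by
      rcases lt_or_gt_of_ne hc with hneg | hpos
      · have : b = false := by simp [hb]; linarith
        rw [this, hxcoord]
        rw [abs_of_neg hneg]
        simp
        field_simp
      · have : b = true := by simp [hb, hpos]
        rw [this, hxcoord, abs_of_pos hpos]
        simp
        field_simp
    have hchoice : ∀ j : {j : Fin d // j ≠ i}, ∃ t : Fin N, |vv t - x j.1| ≤ 1/N :=
      fun j => grid_exists N hNpos (x j.1) (hxabs j.1)
    set t : {j : Fin d // j ≠ i} → Fin N := fun j => (hchoice j).choose with ht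
    set ι : I := ⟨i, b, t⟩ with hι
    have hgx : ‖g ι - x‖ ≤ d * (1/N) := by
      apply euc_norm_le _ _ (by positivity)
      intro j
      have : (g ι - x) j = g ι j - x j := rfl
      rw [this]
      by_cases hji : j = i
      · subst hji
        have : g ι j = if b then (1:ℝ) else -1 := by
          simp only [hg, hι]
          simp
        rw [this, hxi]
        simp only [sub_self, abs_zero]
        positivity
      · have : g ι j = vv (t ⟨j, hji⟩) := by
          simp only [hg, hι, PiLp.toLp_apply]
          rw [dif_neg hji]
        rw [this]
        exact (hchoice ⟨j, hji⟩).choose_spec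
    refine ⟨Fintype.equivFin I ι, ?_⟩
    have hpj : p (Fintype.equivFin I ι) = ‖g ι‖⁻¹ • g ι := by
      rw [hp]; simp
    have hux : u = ‖x‖⁻¹ • x := by
      rw [hxnorm, hx, inv_inv, smul_smul, mul_inv_cancel₀ (ne_of_gt hcabs), one_smul]
    rw [hpj, hux]
    calc ‖‖g ι‖⁻¹ • g ι - ‖x‖⁻¹ • x‖ ≤ 2 * ‖g ι - x‖ := normalize_sub_le hx1 (hg1 ι)
      _ ≤ 2 * (d * (1/N)) := by linarith
      _ ≤ e := by
          rw [div_le_iff₀ he] at hNge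
          have h8 : 2*((d:ℝ)*(1/N)) = 2*d/N := by ring
          rw [h8, div_le_iff₀ hNR]
          linarith


set_option maxHeartbeats 1000000 in
/-- the covering lemma for cones. A cone of aperture `α` around a `k`-plane can
be covered by boundedly many one-sided one-dimensional cones of aperture `αs`, which in turn
lie in the cone of aperture `bα`. -/
theorem stmt7 (d : ℕ) (hd : 1 ≤ d) :
    ∃ b K : ℝ, 1 ≤ b ∧ 0 < K ∧
      ∀ (k : ℕ) (α s : ℝ) (V : Submodule ℝ (Euc d)),
        1 ≤ k → k < d → 0 < α → α < 1 → 0 < s → s ≤ 1 → finrank ℝ V = k →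
        ∃ (m : ℕ) (w : Fin m → Euc d),
          (m : ℝ) ≤ K * (α * s) ^ ((1 : ℤ) - d) ∧ (∀ j, ‖w j‖ = 1) ∧
          cone V 0 α ⊆ (⋃ j, oneSidedCone (w j) 0 (α * s)) ∧
          (⋃ j, oneSidedCone (w j) 0 (α * s)) ⊆ (⋃ j, oneSidedCone (w j) 0 α) ∧
          (⋃ j, oneSidedCone (w j) 0 α) ⊆ cone V 0 (b * α) := by
  classical
  have hdR : (1:ℝ) ≤ d := by exact_mod_cast hd
  refine ⟨3, (16*d)^d, by norm_num, by positivity, ?_⟩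
  intro k α s V hk hkd hα hα1 hs hs1 hV
  set e : ℝ := α * s / 2 with he_def
  have hαs : 0 < α * s := by positivity
  have hαs1 : α * s ≤ 1 := by nlinarith
  have he : 0 < e := by positivity
  have he1 : e ≤ 1 := by rw [he_def]; linarith
  have heα : e ≤ α := by rw [he_def]; nlinarith
  obtain ⟨m, p, hm, hcount, hunit, hcover⟩ := sphere_net d hd e he he1
  -- unit vector in V
  have hVne : V ≠ ⊥ := by
    intro h
    rw [h] at hV
    simp [finrank_bot] at hV
    omega
  obtain ⟨v0, hv0V, hv0ne⟩ := Submodule.exists_mem_ne_zero_of_ne_bot hVne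
  set w0 : Euc d := ‖v0‖⁻¹ • v0 with hw0
  have hw0V : w0 ∈ V := V.smul_mem _ hv0V
  have hw0n : ‖w0‖ = 1 := norm_smul_inv_norm hv0ne
  set w : Fin m → Euc d := fun j => if ‖projCLM Vᗮ (p j)‖ ≤ 2*α then p j else w0 with hw
  have hwj_eq : ∀ j, w j = if ‖projCLM Vᗮ (p j)‖ ≤ 2*α then p j else w0 := fun j => rfl
  have hwunit : ∀ j, ‖w j‖ = 1 := by
    intro j
    rw [hwj_eq]
    split
    · exact hunit j
    · exact hw0n
  have hwproj : ∀ j, ‖projCLM Vᗮ (w j)‖ ≤ 2*α := by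
    intro j
    rw [hwj_eq]
    split
    · assumption
    · have : projCLM Vᗮ w0 = 0 := by
        have h0 : Vᗮ.orthogonalProjectionOnto w0 = 0 :=
          Submodule.orthogonalProjectionOnto_apply_of_mem_orthogonal (V.le_orthogonal_orthogonal hw0V)
        show (Vᗮ.orthogonalProjectionOnto w0 : Euc d) = 0
        rw [h0]; rfl
      rw [this]
      simp
      positivity
  refine ⟨m, w, ?_, hwunit, ?_, ?_, ?_⟩
  · -- counting
    have hz : (α*s : ℝ) ^ ((1:ℤ) - d) = ((α*s) ^ (d-1 : ℕ))⁻¹ := by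
      have h1 : ((1:ℤ) - d) = -((d-1 : ℕ) : ℤ) := by push_cast; omega
      rw [h1, zpow_neg, zpow_natCast]
    rw [hz]
    have hpow : (0:ℝ) < (α*s) ^ (d-1 : ℕ) := by positivity
    rw [mul_comm ((16*(d:ℝ))^d) _, ← div_eq_inv_mul, le_div_iff₀ hpow]
    have he2 : e ^ (d-1:ℕ) = (α*s)^(d-1:ℕ) / 2^(d-1:ℕ) := by
      rw [he_def, div_pow]
    rw [he2] at hcount
    have h2d : (0:ℝ) < 2^(d-1:ℕ) := by positivity
    rw [div_eq_mul_inv, ← mul_assoc] at hcount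
    have h1 := mul_le_mul_of_nonneg_right hcount h2d.le
    rw [mul_assoc, inv_mul_cancel₀ (ne_of_gt h2d), mul_one] at h1
    have h2 : (2:ℝ)^(d-1:ℕ) ≤ 2^d := pow_le_pow_right₀ one_le_two (by omega)
    have h3 : ((16:ℝ)*d)^d = (8*d)^d * 2^d := by
      rw [← mul_pow]; ring_nf
    rw [h3]
    have h4 : (0:ℝ) ≤ (8*(d:ℝ))^d := by positivity
    nlinarith
  · -- covering
    intro y hy
    simp only [cone, mem_setOf_eq, zero_sub, map_neg, norm_neg] at hy
    by_cases hy0 : y = 0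
    · subst hy0
      refine mem_iUnion.mpr ⟨⟨0, hm⟩, ?_⟩
      constructor
      · simp
      · simp
    · set u : Euc d := ‖y‖⁻¹ • y with hu_def
      have hyn : (0:ℝ) < ‖y‖ := norm_pos_iff.mpr hy0
      have hu : ‖u‖ = 1 := norm_smul_inv_norm hy0
      have hproju : ‖projCLM Vᗮ u‖ ≤ α := by
        have hsm : projCLM Vᗮ u = ‖y‖⁻¹ • projCLM Vᗮ y := by
          rw [hu_def, _root_.map_smul]
        rw [hsm, norm_smul, Real.norm_eq_abs, abs_of_nonneg (by positivity)]
        rw [inv_mul_le_iff₀ hyn]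
        calc ‖projCLM Vᗮ y‖ ≤ α * ‖y‖ := hy
          _ = ‖y‖ * α := mul_comm _ _
      obtain ⟨j, hj⟩ := hcover u hu
      have hkeep : ‖projCLM Vᗮ (p j)‖ ≤ 2*α := by
        have : p j = u + (p j - u) := by abel
        calc ‖projCLM Vᗮ (p j)‖ = ‖projCLM Vᗮ u + projCLM Vᗮ (p j - u)‖ := by
              rw [← map_add]; rw [← this]
          _ ≤ ‖projCLM Vᗮ u‖ + ‖projCLM Vᗮ (p j - u)‖ := norm_add_le _ _
          _ ≤ α + ‖p j - u‖ := add_le_add hproju (norm_projCLM_le _ _)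
          _ ≤ α + e := by linarith
          _ ≤ 2*α := by linarith
      have hwj : w j = p j := by rw [hwj_eq]; exact if_pos hkeep
      set W := p j with hW_def
      have hWn : ‖W‖ = 1 := hunit j
      have hδ : ‖W - u‖ ≤ e := hj
      have hδ0 : (0:ℝ) ≤ ‖W - u‖ := norm_nonneg _
      have hIu : ⟪W, u⟫ = 1 - ‖W - u‖^2/2 := by
        have := norm_sub_sq_real W u
        rw [hWn, hu] at this
        linarith [this]
      refine mem_iUnion.mpr ⟨j, ?_⟩
      rw [hwj]
      constructor
      · show ‖projCLM (Submodule.span ℝ {W})ᗮ (0 - y)‖ ≤ (α*s) * ‖0 - y‖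
        rw [zero_sub, map_neg, norm_neg, norm_neg]
        rw [projCLM_span_orthogonal hWn]
        have hyu : y = ‖y‖ • u := by
          rw [hu_def, smul_smul, mul_inv_cancel₀ (ne_of_gt hyn), one_smul]
        have hiWy : ⟪W, y⟫ = ‖y‖ * ⟪W, u⟫ := by
          conv_lhs => rw [hyu]
          rw [real_inner_smul_right]
        have key : y - ⟪W, y⟫ • W = ‖y‖ • (u - ⟪W, u⟫ • W) := by
          rw [smul_sub, ← hyu, hiWy, smul_smul]
        rw [key, norm_smul, Real.norm_eq_abs, abs_of_pos hyn]
        have hsplit : u - ⟪W, u⟫ • W = (u - W) + (1 - ⟪W, u⟫) • W := by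
          rw [sub_smul, one_smul]
          abel
        have hbound : ‖u - ⟪W, u⟫ • W‖ ≤ α * s := by
          rw [hsplit]
          calc ‖(u - W) + (1 - ⟪W, u⟫) • W‖ ≤ ‖u - W‖ + ‖(1 - ⟪W, u⟫) • W‖ := norm_add_le _ _
            _ = ‖u - W‖ + |1 - ⟪W, u⟫| := by rw [norm_smul, Real.norm_eq_abs, hWn, mul_one]
            _ = ‖W - u‖ + ‖W - u‖^2/2 := by
                rw [norm_sub_rev, hIu]
                have hr : (1:ℝ) - (1 - ‖W - u‖^2/2) = ‖W - u‖^2/2 := by ring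
                rw [hr, abs_of_nonneg (by positivity)]
            _ ≤ α * s := by nlinarith
        calc ‖y‖ * ‖u - ⟪W, u⟫ • W‖ ≤ ‖y‖ * (α*s) := by nlinarith
          _ = (α*s) * ‖y‖ := mul_comm _ _
      · show (0:ℝ) ≤ ⟪y - 0, W⟫
        rw [sub_zero]
        have hyu : y = ‖y‖ • u := by
          rw [hu_def, smul_smul, mul_inv_cancel₀ (ne_of_gt hyn), one_smul]
        conv_rhs => rw [hyu]
        rw [real_inner_smul_left, real_inner_comm, hIu]
        have h9 : ‖W - u‖^2 ≤ 1 := by nlinarith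
        have h10 : (0:ℝ) ≤ 1 - ‖W - u‖^2/2 := by linarith
        exact mul_nonneg hyn.le h10
  · -- αs ⊆ α
    apply iUnion_mono
    intro j y hy
    obtain ⟨h1, h2⟩ := hy
    refine ⟨le_trans h1 ?_, h2⟩
    apply mul_le_mul_of_nonneg_right _ (norm_nonneg _)
    nlinarith
  · -- ⊆ cone V 0 (3α)
    intro y hy
    obtain ⟨j, h1, h2⟩ := mem_iUnion.mp hy
    set W := w j with hW_def
    have hWn : ‖W‖ = 1 := hwunit j
    show ‖projCLM Vᗮ (0 - y)‖ ≤ (3*α) * ‖0 - y‖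
    rw [zero_sub, map_neg, norm_neg, norm_neg]
    have h1' : ‖y - ⟪W, y⟫ • W‖ ≤ α * ‖y‖ := by
      have := h1
      rw [zero_sub, map_neg, norm_neg, norm_neg, projCLM_span_orthogonal hWn] at this
      exact this
    have hdecomp : projCLM Vᗮ y = projCLM Vᗮ (y - ⟪W, y⟫ • W) + ⟪W, y⟫ • projCLM Vᗮ W := by
      rw [map_sub, _root_.map_smul]
      abel
    rw [hdecomp]
    calc ‖projCLM Vᗮ (y - ⟪W, y⟫ • W) + ⟪W, y⟫ • projCLM Vᗮ W‖
        ≤ ‖projCLM Vᗮ (y - ⟪W, y⟫ • W)‖ + ‖⟪W, y⟫ • projCLM Vᗮ W‖ := norm_add_le _ _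
      _ ≤ α * ‖y‖ + |⟪W, y⟫| * ‖projCLM Vᗮ W‖ := by
          apply add_le_add
          · exact le_trans (norm_projCLM_le _ _) h1'
          · rw [norm_smul, Real.norm_eq_abs]
      _ ≤ α * ‖y‖ + ‖y‖ * (2*α) := by
          apply add_le_add le_rfl
          have hCS : |⟪W, y⟫| ≤ ‖y‖ := by
            have := abs_real_inner_le_norm W y
            rw [hWn, one_mul] at this
            exact this
          have := hwproj j
          nlinarith [abs_nonneg ⟪W, y⟫, norm_nonneg (projCLM Vᗮ W), norm_nonneg y]
      _ = (3*α) * ‖y‖ := by ring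


end
end

section
/- Let 1 ≤ n < d, V ∈ G(d,n), δ > 0, and let F ⊂ ℝ^d be a finite set. Define f_V : V → ℝ by f_V(z) = Σ_{x∈F} 1_{B(π_V x, δ)}(z), where B(π_V x, δ) is the closed ball in V. Then ∫_V f_V(z)² dHⁿ(z) ≥ 2^{−n}·ωₙ·δⁿ · #{(x,y) ∈ F × F : |π_V(x−y)| ≤ δ}, where ωₙ is the Hⁿ-measure of the unit ball of an n-dimensional subspace. -/
open MeasureTheory Metric Module Set
open scoped ENNReal NNReal RealInnerProductSpace Pointwise

noncomputable section

lemma ballMeasAux {d n : ℕ} (V : Submodule ℝ (Euc d)) (hV : finrank ℝ V = n)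
    {c : Euc d} (hc : c ∈ V) {r : ℝ} (hr : 0 < r) :
    μH[n] (closedBall c r ∩ (V : Set (Euc d)))
      = ENNReal.ofReal (r ^ n) * μH[n] (closedBall (0 : Euc n) 1) := by
  have h1 : closedBall c r ∩ (V : Set (Euc d))
      = (fun z => c + z) '' (closedBall (0 : Euc d) r ∩ V) := by
    ext z
    simp only [mem_image, mem_inter_iff, mem_closedBall, dist_zero_right, SetLike.mem_coe]
    constructor
    · rintro ⟨hz, hzV⟩
      exact ⟨z - c, ⟨by simpa [dist_eq_norm] using hz, V.sub_mem hzV hc⟩, by abel⟩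
    · rintro ⟨w, ⟨hw, hwV⟩, rfl⟩
      exact ⟨by simpa [dist_eq_norm] using hw, V.add_mem hc hwV⟩
  have h2 : closedBall (0 : Euc d) r ∩ (V : Set (Euc d))
      = r • (closedBall (0 : Euc d) 1 ∩ V) := by
    ext z
    simp only [mem_smul_set, mem_inter_iff, mem_closedBall, dist_zero_right, SetLike.mem_coe]
    constructor
    · rintro ⟨hz, hzV⟩
      refine ⟨r⁻¹ • z, ⟨?_, V.smul_mem _ hzV⟩, by rw [smul_inv_smul₀ hr.ne']⟩
      rw [norm_smul, norm_inv, Real.norm_of_nonneg hr.le, inv_mul_le_iff₀ hr, mul_one]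
      exact hz
    · rintro ⟨w, ⟨hw, hwV⟩, rfl⟩
      refine ⟨?_, V.smul_mem _ hwV⟩
      rw [norm_smul, Real.norm_of_nonneg hr.le]
      calc r * ‖w‖ ≤ r * 1 := by gcongr
        _ = r := mul_one r
  have hiso : Isometry (fun z : Euc d => c + z) :=
    Isometry.of_dist_eq fun x y => dist_add_left c x y
  have h3 : μH[n] ((closedBall (0 : Euc d) 1) ∩ V) = μH[n] (closedBall (0 : Euc n) 1) := by
    have e : V ≃ₗᵢ[ℝ] Euc n :=
      (stdOrthonormalBasis ℝ V).repr.trans (LinearIsometryEquiv.piLpCongrLeft 2 ℝ ℝ (finCongr hV))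
    let g : Euc n →ₗᵢ[ℝ] Euc d := V.subtypeₗᵢ.comp e.symm.toLinearIsometry
    have himg : ⇑g '' (closedBall 0 1) = closedBall (0 : Euc d) 1 ∩ V := by
      ext z
      simp only [mem_image, mem_inter_iff, mem_closedBall, dist_zero_right, SetLike.mem_coe]
      constructor
      · rintro ⟨w, hw, rfl⟩
        refine ⟨by rw [g.norm_map]; exact hw, ?_⟩
        exact (e.symm w).2
      · rintro ⟨hz, hzV⟩
        refine ⟨e ⟨z, hzV⟩, ?_, ?_⟩
        · rw [e.norm_map]; exact hz
        · show ((e.symm (e ⟨z, hzV⟩) : V) : Euc d) = z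
          rw [e.symm_apply_apply]
    rw [← himg, g.isometry.hausdorffMeasure_image (Or.inl (by positivity))]
  rw [h1, hiso.hausdorffMeasure_image (Or.inl (by positivity)), h2,
    Measure.hausdorffMeasure_smul₀ (by positivity) hr.ne' _, h3]
  rw [ENNReal.smul_def, smul_eq_mul]
  congr 1
  rw [Real.nnnorm_of_nonneg hr.le, NNReal.rpow_natCast, ← Real.toNNReal_of_nonneg hr.le,
    ← Real.toNNReal_pow hr.le, ENNReal.ofReal]


/-- the `L²`-norm of `f_V = Σ_{x ∈ F} 1_{B(π_V x, δ)}` controls from above the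
number of pairs of points of `F` whose projections to `V` are `δ`-close. -/
theorem stmt14 (n d : ℕ) (hn : 1 ≤ n) (hnd : n < d) (V : Submodule ℝ (Euc d))
    (hV : finrank ℝ V = n) (δ : ℝ) (hδ : 0 < δ) (F : Finset (Euc d)) :
    ENNReal.ofReal (δ ^ n) * μH[n] (closedBall (0 : Euc n) 1) / 2 ^ n *
        ({p : Euc d × Euc d | p.1 ∈ F ∧ p.2 ∈ F ∧ ‖projCLM V (p.1 - p.2)‖ ≤ δ}.ncard) ≤
      ∫⁻ z, (∑ x ∈ F, (closedBall (projCLM V x) δ ∩ (V : Set (Euc d))).indicator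
          (fun _ => (1 : ℝ≥0∞)) z) ^ 2 ∂(hausdorffOn n V) := by
  set ω := μH[(n : ℝ)] (closedBall (0 : Euc n) 1) with hω
  set S : Euc d → Set (Euc d) :=
    fun x => closedBall (projCLM V x) δ ∩ (V : Set (Euc d)) with hS
  have hVclosed : IsClosed (V : Set (Euc d)) := Submodule.closed_of_finiteDimensional V
  have hSmeas : ∀ x, MeasurableSet (S x) :=
    fun x => (Metric.isClosed_closedBall.inter hVclosed).measurableSet
  have hproj : ∀ w : Euc d, projCLM V w ∈ V := by
    intro w; simp [projCLM]
  -- rewrite the integral as a double sum of measures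
  have hpt : ∀ z, (∑ x ∈ F, (S x).indicator (fun _ => (1 : ℝ≥0∞)) z) ^ 2
      = ∑ x ∈ F, ∑ y ∈ F, (S x ∩ S y).indicator (fun _ => (1 : ℝ≥0∞)) z := by
    intro z
    rw [sq, Finset.sum_mul_sum]
    refine Finset.sum_congr rfl fun x _ => Finset.sum_congr rfl fun y _ => ?_
    rw [← Set.inter_indicator_mul]
    simp
  have hint : ∫⁻ z, (∑ x ∈ F, (S x).indicator (fun _ => (1 : ℝ≥0∞)) z) ^ 2 ∂(hausdorffOn n V)
      = ∑ x ∈ F, ∑ y ∈ F, (hausdorffOn n V) (S x ∩ S y) := by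
    simp only [hpt]
    rw [lintegral_finset_sum _ (fun x _ => Finset.measurable_sum _
      (fun y _ => measurable_const.indicator ((hSmeas x).inter (hSmeas y))))]
    refine Finset.sum_congr rfl fun x _ => ?_
    rw [lintegral_finset_sum _
      (fun y _ => measurable_const.indicator ((hSmeas x).inter (hSmeas y)))]
    refine Finset.sum_congr rfl fun y _ => ?_
    rw [lintegral_indicator ((hSmeas x).inter (hSmeas y))]
    exact setLIntegral_one _
  rw [hint]
  -- the good pairs
  set G : Finset (Euc d × Euc d) :=
    (F ×ˢ F).filter (fun p => ‖projCLM V (p.1 - p.2)‖ ≤ δ) with hG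
  have hset : {p : Euc d × Euc d | p.1 ∈ F ∧ p.2 ∈ F ∧ ‖projCLM V (p.1 - p.2)‖ ≤ δ}
      = (G : Set (Euc d × Euc d)) := by
    ext p
    simp [hG, Finset.mem_filter, Finset.mem_product, and_assoc]
  -- the constant
  set c0 : ℝ≥0∞ := ENNReal.ofReal ((δ / 2) ^ n) * ω with hc0
  have hconst : ENNReal.ofReal (δ ^ n) * ω / 2 ^ n = c0 := by
    have h2 : ENNReal.ofReal ((2 : ℝ) ^ n) = (2 : ℝ≥0∞) ^ n := by
      rw [ENNReal.ofReal_pow (by norm_num : (0:ℝ) ≤ 2)]; norm_num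
    rw [hc0, div_pow, ENNReal.ofReal_div_of_pos (by positivity), h2,
      div_eq_mul_inv, div_eq_mul_inv, mul_right_comm]
  -- lower bound for each good pair
  have hpair : ∀ p ∈ G, c0 ≤ (hausdorffOn n V) (S p.1 ∩ S p.2) := by
    rintro ⟨x, y⟩ hp
    have hxy : ‖projCLM V (x - y)‖ ≤ δ := (Finset.mem_filter.1 hp).2
    set m : Euc d := (2 : ℝ)⁻¹ • (projCLM V x + projCLM V y) with hm
    have hmV : m ∈ V := V.smul_mem _ (V.add_mem (hproj x) (hproj y))
    have hdx : dist m (projCLM V x) ≤ δ / 2 := by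
      rw [dist_eq_norm]
      have : m - projCLM V x = (2 : ℝ)⁻¹ • (projCLM V y - projCLM V x) := by
        rw [hm]; module
      rw [this, norm_smul, norm_inv, Real.norm_ofNat, ← map_sub, ← norm_neg, ← map_neg,
        neg_sub]
      rw [div_eq_inv_mul]
      gcongr
    have hdy : dist m (projCLM V y) ≤ δ / 2 := by
      rw [dist_eq_norm]
      have : m - projCLM V y = (2 : ℝ)⁻¹ • (projCLM V x - projCLM V y) := by
        rw [hm]; module
      rw [this, norm_smul, norm_inv, Real.norm_ofNat, ← map_sub]
      rw [div_eq_inv_mul]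
      gcongr
    have hsub : closedBall m (δ / 2) ∩ (V : Set (Euc d)) ⊆ (S x ∩ S y) ∩ V := by
      rintro z ⟨hz, hzV⟩
      have hz' : dist z m ≤ δ / 2 := mem_closedBall.1 hz
      refine ⟨⟨⟨?_, hzV⟩, ⟨?_, hzV⟩⟩, hzV⟩
      · exact mem_closedBall.2 <| (dist_triangle z m (projCLM V x)).trans
          (by linarith)
      · exact mem_closedBall.2 <| (dist_triangle z m (projCLM V y)).trans
          (by linarith)
    calc c0 = μH[n] (closedBall m (δ / 2) ∩ (V : Set (Euc d))) :=
          (ballMeasAux V hV hmV (by positivity)).symm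
      _ ≤ μH[n] ((S x ∩ S y) ∩ V) := measure_mono hsub
      _ = (hausdorffOn n V) (S x ∩ S y) := by
          rw [hausdorffOn, Measure.restrict_apply ((hSmeas x).inter (hSmeas y))]
  -- put everything together
  rw [hset, Set.ncard_coe_finset, hconst]
  calc (c0 : ℝ≥0∞) * G.card = G.card • c0 := by rw [nsmul_eq_mul, mul_comm]
    _ ≤ ∑ p ∈ G, (hausdorffOn n V) (S p.1 ∩ S p.2) := Finset.card_nsmul_le_sum _ _ _ hpair
    _ ≤ ∑ p ∈ F ×ˢ F, (hausdorffOn n V) (S p.1 ∩ S p.2) :=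
        Finset.sum_le_sum_of_subset (Finset.filter_subset _ _)
    _ = ∑ x ∈ F, ∑ y ∈ F, (hausdorffOn n V) (S x ∩ S y) := Finset.sum_product _ _ _


end
end

section
/- Let 1 ≤ n < d and υ > 0. There exists α₀ > 0, depending only on n and υ, with the following property: for every W ∈ G(d,n) and every z ∈ ℝ^d \ {0} with |π_W z| ≤ α₀|z|, there exists V₀ ∈ G(d,n) such that π_{V₀} z = 0 and ‖π_{V₀} − π_W‖ ≤ υ/2. -/
open MeasureTheory Metric Module Set
open scoped ENNReal NNReal RealInnerProductSpace

noncomputable section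

lemma projCLM_apply {d : ℕ} (V : Submodule ℝ (Euc d)) (x : Euc d) :
    projCLM V x = (V.orthogonalProjectionOnto x : Euc d) := rfl

lemma proj_sup_span {d : ℕ} (W' : Submodule ℝ (Euc d)) (e : Euc d) (he : ‖e‖ = 1)
    (hoe : ∀ w ∈ W', ⟪e, w⟫ = 0) (x : Euc d) :
    projCLM (W' ⊔ Submodule.span ℝ {e}) x = projCLM W' x + ⟪e, x⟫ • e := by
  rw [projCLM_apply]
  apply Submodule.eq_starProjection_of_mem_of_inner_eq_zero (K := W' ⊔ Submodule.span ℝ {e})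
  · apply Submodule.add_mem_sup
    · exact (W'.orthogonalProjectionOnto x).2
    · exact Submodule.smul_mem _ _ (Submodule.mem_span_singleton_self e)
  · intro w hw
    rcases Submodule.mem_sup.1 hw with ⟨a, ha, b, hb, rfl⟩
    rcases Submodule.mem_span_singleton.1 hb with ⟨c, rfl⟩
    have h1 : ⟪x - (W'.orthogonalProjectionOnto x : Euc d), a⟫ = 0 :=
      Submodule.starProjection_inner_eq_zero x a ha
    have h2 : ⟪(W'.orthogonalProjectionOnto x : Euc d), e⟫ = 0 := by
      rw [real_inner_comm]; exact hoe _ (W'.orthogonalProjectionOnto x).2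
    have h3 : ⟪e, a⟫ = 0 := hoe a ha
    have h4 : ⟪e, e⟫ = 1 := by
      rw [real_inner_self_eq_norm_sq, he]; norm_num
    have h5 : ⟪x - (W'.orthogonalProjectionOnto x : Euc d), e⟫ = ⟪x, e⟫ := by
      rw [inner_sub_left, h2, sub_zero]
    rw [show x - ((projCLM W' x : Euc d) + ⟪e, x⟫ • e)
        = (x - (W'.orthogonalProjectionOnto x : Euc d)) - ⟪e, x⟫ • e from by
      rw [projCLM_apply]; abel]
    rw [inner_sub_left, inner_add_right, inner_add_right, inner_smul_right,
      inner_smul_right, inner_smul_left]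
    simp only [RCLike.star_def, conj_trivial]
    rw [h1, h3, h5, real_inner_smul_left, h4, real_inner_comm e x]
    ring

lemma finrank_sup_span {d : ℕ} (W' : Submodule ℝ (Euc d)) (e : Euc d) (he : ‖e‖ = 1)
    (hoe : ∀ w ∈ W', ⟪e, w⟫ = 0) :
    finrank ℝ (W' ⊔ Submodule.span ℝ {e} : Submodule ℝ (Euc d)) = finrank ℝ W' + 1 := by
  have hne : e ≠ 0 := by
    intro h; rw [h, norm_zero] at he; norm_num at he
  have hinf : W' ⊓ Submodule.span ℝ {e} = ⊥ := by
    rw [Submodule.eq_bot_iff]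
    rintro v ⟨hv1, hv2⟩
    rcases Submodule.mem_span_singleton.1 hv2 with ⟨c, rfl⟩
    have := hoe _ hv1
    rw [inner_smul_right, real_inner_self_eq_norm_sq, he] at this
    have hc : c = 0 := by nlinarith
    rw [hc, zero_smul]
  have := Submodule.finrank_sup_add_finrank_inf_eq W' (Submodule.span ℝ {e})
  rw [hinf, finrank_span_singleton hne] at this
  simpa using this

set_option maxHeartbeats 2000000 in
/-- if `z` is almost orthogonal to `W ∈ G(d,n)`, there is a plane
`V₀ ∈ G(d,n)` annihilating `z` with `‖π_{V₀} - π_W‖ ≤ υ/2`; the threshold `α₀` depends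
only on `n` and `υ`. -/
theorem stmt16 (n : ℕ) (υ : ℝ) (hn : 1 ≤ n) (hυ : 0 < υ) :
    ∃ α₀ : ℝ, 0 < α₀ ∧
      ∀ d : ℕ, n < d → ∀ W : Submodule ℝ (Euc d), finrank ℝ W = n →
        ∀ z : Euc d, z ≠ 0 → ‖projCLM W z‖ ≤ α₀ * ‖z‖ →
          ∃ V₀ : Submodule ℝ (Euc d), finrank ℝ V₀ = n ∧ projCLM V₀ z = 0 ∧
            ‖projCLM V₀ - projCLM W‖ ≤ υ / 2 := by
  refine ⟨min (υ / 8) (1 / 2), by positivity, ?_⟩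
  intro d hd W hW z hz hα
  by_cases hp : projCLM W z = 0
  · exact ⟨W, hW, hp, by rw [sub_self, norm_zero]; positivity⟩
  · obtain ⟨p, hpdef⟩ : ∃ p : Euc d, p = projCLM W z := ⟨_, rfl⟩
    rw [← hpdef] at hα hp
    have hpW : p ∈ W := hpdef ▸ (W.orthogonalProjectionOnto z).2
    have hpn : 0 < ‖p‖ := norm_pos_iff.2 hp
    have hzn : 0 < ‖z‖ := norm_pos_iff.2 hz
    obtain ⟨α, hαdef⟩ : ∃ α : ℝ, α = ‖p‖ / ‖z‖ := ⟨_, rfl⟩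
    have hα0 : α ≤ min (υ / 8) (1 / 2) := by
      rw [hαdef, div_le_iff₀ hzn]; exact hα
    have hαhalf : α ≤ 1 / 2 := hα0.trans (min_le_right _ _)
    have hαυ : α ≤ υ / 8 := hα0.trans (min_le_left _ _)
    have hαpos : 0 < α := hαdef ▸ div_pos hpn hzn
    obtain ⟨e, hedef⟩ : ∃ e : Euc d, e = ‖p‖⁻¹ • p := ⟨_, rfl⟩
    have hen : ‖e‖ = 1 := by rw [hedef]; exact norm_smul_inv_norm hp
    have heW : e ∈ W := hedef ▸ Submodule.smul_mem _ _ hpW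
    have hzp : ⟪z - p, p⟫ = 0 := by
      rw [hpdef]; exact Submodule.starProjection_inner_eq_zero (K := W) z _ (hpdef ▸ hpW)
    have hpz : ⟪p, z⟫ = ‖p‖ ^ 2 := by
      rw [inner_sub_left, real_inner_self_eq_norm_sq] at hzp
      rw [real_inner_comm]; linarith
    have hez : ⟪e, z⟫ = ‖p‖ := by
      rw [hedef, real_inner_smul_left, hpz, sq]
      field_simp
    have keyA : ∀ w ∈ W, ⟪w, z⟫ = ⟪w, p⟫ := by
      intro w hw
      have h : ⟪z - (W.orthogonalProjectionOnto z : Euc d), w⟫ = 0 := Submodule.starProjection_inner_eq_zero z w hw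
      rw [show ((W.orthogonalProjectionOnto z : Euc d)) = p from hpdef.symm, inner_sub_left] at h
      rw [real_inner_comm z w, real_inner_comm p w]
      linarith
    obtain ⟨W', hW'def⟩ : ∃ W' : Submodule ℝ (Euc d), W' = W ⊓ (Submodule.span ℝ {z})ᗮ :=
      ⟨_, rfl⟩
    have hW'z : ∀ w ∈ W', ⟪z, w⟫ = 0 := by
      intro w hw
      rw [hW'def] at hw
      exact Submodule.mem_orthogonal_singleton_iff_inner_right.1 hw.2
    have hW'W : W' ≤ W := by rw [hW'def]; exact inf_le_left
    have hoeW' : ∀ w ∈ W', ⟪e, w⟫ = 0 := by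
      intro w hw
      have h2 : ⟪p, w⟫ = 0 := by
        rw [real_inner_comm, ← keyA w (hW'W hw), real_inner_comm]
        exact hW'z w hw
      rw [hedef, real_inner_smul_left, h2, mul_zero]
    have hpe : p = ‖p‖ • e := by
      rw [hedef, smul_smul, mul_inv_cancel₀ hpn.ne', one_smul]
    have hWsup : W = W' ⊔ Submodule.span ℝ {e} := by
      apply le_antisymm
      · intro w hw
        have hdecomp : w = (w - ⟪e, w⟫ • e) + ⟪e, w⟫ • e := by abel
        rw [hdecomp]
        apply Submodule.add_mem_sup
        · rw [hW'def]
          refine Submodule.mem_inf.2 ⟨Submodule.sub_mem _ hw (Submodule.smul_mem _ _ heW), ?_⟩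
          rw [Submodule.mem_orthogonal_singleton_iff_inner_right, inner_sub_right,
            real_inner_smul_right]
          have h1 : ⟪z, w⟫ = ‖p‖ * ⟪e, w⟫ := by
            rw [real_inner_comm w z, keyA w hw]
            conv_lhs => rw [hpe]
            rw [real_inner_smul_right, real_inner_comm e w]
          have h2 : ⟪z, e⟫ = ‖p‖ := by rw [real_inner_comm e z]; exact hez
          rw [h1, h2]; ring
        · exact Submodule.smul_mem _ _ (Submodule.mem_span_singleton_self e)
      · refine sup_le hW'W ((Submodule.span_le).2 ?_)
        simpa using heW
    obtain ⟨t, htdef⟩ : ∃ t : ℝ, t = ‖p‖ / ‖z‖ ^ 2 := ⟨_, rfl⟩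
    have ht0 : 0 ≤ t := by rw [htdef]; positivity
    obtain ⟨v, hvdef⟩ : ∃ v : Euc d, v = e - t • z := ⟨_, rfl⟩
    have hv2 : ‖v‖ ^ 2 = 1 - α ^ 2 := by
      rw [hvdef, norm_sub_sq_real, hen, real_inner_smul_right, hez, norm_smul,
        Real.norm_eq_abs, abs_of_nonneg ht0, htdef, hαdef]
      field_simp
      ring
    have hvne : v ≠ 0 := by
      intro h
      rw [h, norm_zero] at hv2
      nlinarith
    have hvpos : 0 < ‖v‖ := norm_pos_iff.2 hvne
    have hvle1 : ‖v‖ ≤ 1 := by nlinarith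
    obtain ⟨e', he'def⟩ : ∃ e' : Euc d, e' = ‖v‖⁻¹ • v := ⟨_, rfl⟩
    have he'n : ‖e'‖ = 1 := by rw [he'def]; exact norm_smul_inv_norm hvne
    have hzv : ⟪z, v⟫ = 0 := by
      rw [hvdef, inner_sub_right, real_inner_smul_right, real_inner_comm e z, hez,
        real_inner_self_eq_norm_sq, htdef]
      field_simp
      ring
    have hze' : ⟪z, e'⟫ = 0 := by
      rw [he'def, real_inner_smul_right, hzv, mul_zero]
    have hoe' : ∀ w ∈ W', ⟪e', w⟫ = 0 := by
      intro w hw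
      rw [he'def, real_inner_smul_left, hvdef, inner_sub_left, real_inner_smul_left,
        hoeW' w hw, hW'z w hw]
      ring
    have heve : ‖e' - v‖ ≤ α := by
      have h1 : e' - v = (‖v‖⁻¹ - 1) • v := by
        rw [he'def, sub_smul, one_smul]
      have h2 : (1:ℝ) ≤ ‖v‖⁻¹ := by
        rw [le_inv_comm₀ one_pos hvpos]; simpa using hvle1
      rw [h1, norm_smul, Real.norm_eq_abs, abs_of_nonneg (by linarith)]
      have h3 : (‖v‖⁻¹ - 1) * ‖v‖ = 1 - ‖v‖ := by
        field_simp
      rw [h3]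
      have hvn : 0 ≤ ‖v‖ := norm_nonneg v
      have h4 : 0 ≤ α * (1 - α + ‖v‖) := mul_nonneg hαpos.le (by linarith)
      have h5eq : (1 - ‖v‖ - α) * (1 + ‖v‖) = -(α * (1 - α + ‖v‖)) := by
        linear_combination -hv2
      have h6 : (1 - ‖v‖ - α) * (1 + ‖v‖) ≤ 0 := by rw [h5eq]; linarith
      by_contra hcon
      push_neg at hcon
      have h7 : 0 < (1 - ‖v‖ - α) * (1 + ‖v‖) :=
        mul_pos (by linarith) (by linarith)
      linarith
    have hve : ‖v - e‖ = α := by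
      rw [hvdef, sub_sub_cancel_left, norm_neg, norm_smul, Real.norm_eq_abs,
        abs_of_nonneg ht0, htdef, hαdef]
      field_simp
    have hee' : ‖e' - e‖ ≤ 2 * α := by
      have h0 : e' - e = (e' - v) + (v - e) := by abel
      rw [h0]
      calc ‖(e' - v) + (v - e)‖ ≤ ‖e' - v‖ + ‖v - e‖ := norm_add_le _ _
        _ ≤ α + α := by rw [hve]; linarith
        _ = 2 * α := by ring
    refine ⟨W' ⊔ Submodule.span ℝ {e'}, ?_, ?_, ?_⟩
    · rw [finrank_sup_span W' e' he'n hoe']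
      have h1 := finrank_sup_span W' e hen hoeW'
      rw [← hWsup, hW] at h1
      omega
    · rw [proj_sup_span W' e' he'n hoe' z]
      have hmem : z ∈ W'ᗮ := by
        rw [Submodule.mem_orthogonal]
        intro u hu
        rw [real_inner_comm]; exact hW'z u hu
      have h1 : W'.orthogonalProjectionOnto z = 0 :=
        Submodule.orthogonalProjectionOnto_apply_of_mem_orthogonal hmem
      rw [projCLM_apply, h1, real_inner_comm, hze', zero_smul, add_zero,
        Submodule.coe_zero]
    · have hPW : projCLM W = projCLM (W' ⊔ Submodule.span ℝ {e}) := congrArg projCLM hWsup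
      have hdiff : ∀ x : Euc d, (projCLM (W' ⊔ Submodule.span ℝ {e'}) - projCLM W) x
          = ⟪e', x⟫ • e' - ⟪e, x⟫ • e := by
        intro x
        rw [ContinuousLinearMap.sub_apply, proj_sup_span W' e' he'n hoe' x, hPW,
          proj_sup_span W' e hen hoeW' x]
        abel
      apply ContinuousLinearMap.opNorm_le_bound _ (by positivity)
      intro x
      rw [hdiff x]
      clear hdiff hPW
      have hsplit : ⟪e', x⟫ • e' - ⟪e, x⟫ • e
          = ⟪e' - e, x⟫ • e' + ⟪e, x⟫ • (e' - e) := by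
        rw [inner_sub_left, sub_smul, smul_sub]
        abel
      rw [hsplit]
      calc ‖⟪e' - e, x⟫ • e' + ⟪e, x⟫ • (e' - e)‖
          ≤ ‖⟪e' - e, x⟫ • e'‖ + ‖⟪e, x⟫ • (e' - e)‖ := norm_add_le _ _
        _ = |⟪e' - e, x⟫| * ‖e'‖ + |⟪e, x⟫| * ‖e' - e‖ := by
            rw [norm_smul, norm_smul, Real.norm_eq_abs, Real.norm_eq_abs]
        _ ≤ (‖e' - e‖ * ‖x‖) * 1 + (‖e‖ * ‖x‖) * ‖e' - e‖ := by
            gcongr <;>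
              first
                | exact he'n.le
                | exact abs_real_inner_le_norm _ _
        _ ≤ υ / 2 * ‖x‖ := by
            rw [hen]
            have h6 : ‖e' - e‖ * ‖x‖ ≤ (2 * α) * ‖x‖ :=
              mul_le_mul_of_nonneg_right hee' (norm_nonneg x)
            have h7 : α * ‖x‖ ≤ (υ / 8) * ‖x‖ :=
              mul_le_mul_of_nonneg_right hαυ (norm_nonneg x)
            linarith [h6, h7]

end
end
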